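/- For a two-person game form g : S₁ × S₂ → A, Nash-solvability (every pair of real-valued payoffs (u₁,u₂) on A admits a Nash equilibrium), zero-sum solvability (every zero-sum payoff pair admits a saddle point), and ±1-solvability (every zero-sum payoff pair taking only values +1 and −1 admits a saddle point) are equivalent. -/

import Mathlib

/-! STATEMENT 2: for a two-person game form `g : S₁ × S₂ → A`, Nash-solvability,
zero-sum solvability and ±1-solvability are equivalent. -/

section GameForm

variable {S₁ S₂ A : Type*}

/-- `(s₁, s₂)` is a Nash equilibrium of the game `(g, u₁, u₂)`. -/
def IsNashEq (g : S₁ → S₂ → A) (u₁ u₂ : A → ℝ) (s₁ : S₁) (s₂ : S₂) : Prop :=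
  (∀ t₁ : S₁, u₁ (g t₁ s₂) ≤ u₁ (g s₁ s₂)) ∧ (∀ t₂ : S₂, u₂ (g s₁ t₂) ≤ u₂ (g s₁ s₂))

/-- Nash-solvability: every pair of real-valued payoffs admits a Nash equilibrium. -/
def NashSolvable (g : S₁ → S₂ → A) : Prop :=
  ∀ u₁ u₂ : A → ℝ, ∃ s₁ s₂, IsNashEq g u₁ u₂ s₁ s₂

/-- Zero-sum solvability: every zero-sum payoff pair admits a saddle point. -/
def ZeroSumSolvable (g : S₁ → S₂ → A) : Prop :=
  ∀ u₁ u₂ : A → ℝ, (∀ a, u₁ a + u₂ a = 0) → ∃ s₁ s₂, IsNashEq g u₁ u₂ s₁ s₂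

/-- ±1-solvability: every zero-sum payoff pair taking only the values `+1` and
`-1` admits a saddle point. -/
def PMOneSolvable (g : S₁ → S₂ → A) : Prop :=
  ∀ u₁ u₂ : A → ℝ, (∀ a, u₁ a + u₂ a = 0) →
    (∀ a, u₁ a = 1 ∨ u₁ a = -1) →
    ∃ s₁ s₂, IsNashEq g u₁ u₂ s₁ s₂

end GameForm

open Finset

open scoped Classical in
/-- number of `u₁`-values strictly above `u₁ b` -/
noncomputable def nAbove {A : Type*} [Fintype A] (u₁ : A → ℝ) (b : A) : ℕ :=
  ((Finset.univ.image u₁).filter (fun v => u₁ b < v)).card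

open scoped Classical in
lemma nAbove_lt {A : Type*} [Fintype A] (u₁ : A → ℝ) {b c : A} (h : u₁ b < u₁ c) :
    nAbove u₁ c < nAbove u₁ b := by
  apply Finset.card_lt_card
  rw [Finset.ssubset_iff_of_subset]
  · exact ⟨u₁ c, by simp [Finset.mem_filter, h], by simp⟩
  · intro v hv
    simp only [Finset.mem_filter] at hv ⊢
    exact ⟨hv.1, h.trans hv.2⟩

open scoped Classical in
lemma exists_witness {S₁ S₂ A : Type*} [Fintype S₁] [Fintype S₂] [Fintype A]
    [Nonempty S₁] [Nonempty S₂] (g : S₁ → S₂ → A) (u₁ u₂ : A → ℝ)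
    (hne : ∀ s₁ s₂, ¬ IsNashEq g u₁ u₂ s₁ s₂) :
    ∃ B : Finset A, (∀ j, ∃ i, g i j ∈ B) ∧ (∀ i, ∃ j, g i j ∉ B) := by
  set M : ℕ := Fintype.card S₂ + 1 with hM
  -- potential
  set Φ : Finset A → ℕ := fun B => ∑ b ∈ B, M ^ nAbove u₁ b with hΦ
  suffices h : ∀ (N : ℕ) (B : Finset A), Φ B ≤ N → (∀ j, ∃ i, g i j ∈ B) →
      ∃ B' : Finset A, (∀ j, ∃ i, g i j ∈ B') ∧ (∀ i, ∃ j, g i j ∉ B') by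
    refine h (Φ Finset.univ) Finset.univ le_rfl (fun j => ⟨Classical.arbitrary S₁, Finset.mem_univ _⟩)
  intro N
  induction N with
  | zero =>
    intro B hΦB htrans
    by_cases hcov : ∀ i, ∃ j, g i j ∉ B
    · exact ⟨B, htrans, hcov⟩
    · push_neg at hcov
      obtain ⟨i0, hi0⟩ := hcov
      exfalso
      have hb : g i0 (Classical.arbitrary S₂) ∈ B := hi0 _
      have h1 : M ^ nAbove u₁ (g i0 (Classical.arbitrary S₂)) ≤ Φ B :=
        Finset.single_le_sum (f := fun b => M ^ nAbove u₁ b) (fun i _ => Nat.zero_le _) hb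
      have h2 : 0 < M ^ nAbove u₁ (g i0 (Classical.arbitrary S₂)) :=
        Nat.pow_pos (by omega)
      omega
  | succ N ih =>
    intro B hΦB htrans
    by_cases hcov : ∀ i, ∃ j, g i j ∉ B
    · exact ⟨B, htrans, hcov⟩
    push_neg at hcov
    obtain ⟨i0, hi0⟩ := hcov
    -- b* : u₂-max of row i0
    obtain ⟨jh, _, hjh⟩ := Finset.exists_max_image Finset.univ (fun j => u₂ (g i0 j))
      Finset.univ_nonempty
    set bs : A := g i0 jh with hbs
    have hbsB : bs ∈ B := hi0 jh
    have hrowmax : ∀ t₂ : S₂, u₂ (g i0 t₂) ≤ u₂ bs := fun t₂ => hjh t₂ (Finset.mem_univ _)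
    -- improvement choice for critical columns
    have himp : ∀ j : S₂, ∃ t : S₁, (∀ i, g i j ∈ B → g i j = bs) → u₁ bs < u₁ (g t j) := by
      intro j
      by_cases hc : ∀ i, g i j ∈ B → g i j = bs
      · have hcell : g i0 j = bs := hc i0 (hi0 j)
        have hnotNE := hne i0 j
        rw [IsNashEq] at hnotNE
        push_neg at hnotNE
        have hP2 : ∀ t₂ : S₂, u₂ (g i0 t₂) ≤ u₂ (g i0 j) := by rw [hcell]; exact hrowmax
        have hP1 : ¬ (∀ t₁ : S₁, u₁ (g t₁ j) ≤ u₁ (g i0 j)) := by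
          intro hall
          obtain ⟨t₂, ht₂⟩ := hnotNE hall
          exact absurd (hP2 t₂) (not_le.mpr ht₂)
        push_neg at hP1
        obtain ⟨t, ht⟩ := hP1
        refine ⟨t, fun _ => ?_⟩
        rw [hcell] at ht
        exact ht
      · exact ⟨Classical.arbitrary S₁, fun h => absurd h hc⟩
    choose tfun htfun using himp
    set crit : Finset S₂ := Finset.univ.filter (fun j => ∀ i, g i j ∈ B → g i j = bs) with hcrit
    set Cs : Finset A := crit.image (fun j => g (tfun j) j) with hCs
    set B' : Finset A := (B.erase bs) ∪ Cs with hB'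
    -- transversality
    have htrans' : ∀ j, ∃ i, g i j ∈ B' := by
      intro j
      by_cases hc : ∀ i, g i j ∈ B → g i j = bs
      · refine ⟨tfun j, Finset.mem_union_right _ ?_⟩
        exact Finset.mem_image_of_mem _ (Finset.mem_filter.mpr ⟨Finset.mem_univ _, hc⟩)
      · push_neg at hc
        obtain ⟨i, hiB, hineq⟩ := hc
        exact ⟨i, Finset.mem_union_left _ (Finset.mem_erase.mpr ⟨hineq, hiB⟩)⟩
    -- potential decrease
    have hdec : Φ B' < Φ B := by
      have hEr : Φ (B.erase bs) + M ^ nAbove u₁ bs = Φ B := by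
        simpa [hΦ] using Finset.sum_erase_add B (fun b => M ^ nAbove u₁ b) hbsB
      have hUn : Φ B' ≤ Φ (B.erase bs) + Φ Cs := by
        have h := Finset.sum_union_inter (s₁ := B.erase bs) (s₂ := Cs)
          (f := fun b => M ^ nAbove u₁ b)
        simp only [hΦ, hB']
        omega
      have hCsBound : Φ Cs < M ^ nAbove u₁ bs := by
        rcases Cs.eq_empty_or_nonempty with hE | hNE
        · rw [hE]
          simp only [hΦ, Finset.sum_empty]
          exact Nat.pow_pos (by omega)
        · -- every c ∈ Cs has nAbove < nAbove bs
          have hmem : ∀ c ∈ Cs, u₁ bs < u₁ c := by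
            intro c hc
            obtain ⟨j, hj, rfl⟩ := Finset.mem_image.mp hc
            exact htfun j ((Finset.mem_filter.mp hj).2)
          have hone : 1 ≤ nAbove u₁ bs := by
            obtain ⟨c, hc⟩ := hNE
            have := nAbove_lt u₁ (hmem c hc)
            omega
          have hterm : ∀ c ∈ Cs, M ^ nAbove u₁ c ≤ M ^ (nAbove u₁ bs - 1) := by
            intro c hc
            have hlt := nAbove_lt u₁ (hmem c hc)
            exact Nat.pow_le_pow_right (by omega) (by omega)
          calc Φ Cs ≤ Cs.card • M ^ (nAbove u₁ bs - 1) :=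
                Finset.sum_le_card_nsmul _ _ _ hterm
            _ = Cs.card * M ^ (nAbove u₁ bs - 1) := by rw [nsmul_eq_mul, Nat.cast_id]
            _ ≤ Fintype.card S₂ * M ^ (nAbove u₁ bs - 1) := by
                have h1 : Cs.card ≤ crit.card := Finset.card_image_le
                have h2 : crit.card ≤ Fintype.card S₂ := by
                  simpa using Finset.card_filter_le Finset.univ _
                exact Nat.mul_le_mul_right _ (h1.trans h2)
            _ < M * M ^ (nAbove u₁ bs - 1) := by
                have : 0 < M ^ (nAbove u₁ bs - 1) := Nat.pow_pos (by omega)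
                have hMlt : Fintype.card S₂ < M := by omega
                exact Nat.mul_lt_mul_of_lt_of_le hMlt le_rfl this
            _ = M ^ (nAbove u₁ bs - 1 + 1) := by rw [pow_succ, Nat.mul_comm]
            _ = M ^ nAbove u₁ bs := by rw [Nat.sub_add_cancel hone]
      omega
    exact ih B' (by omega) htrans'


open scoped Classical in
lemma pmone_to_nash {S₁ S₂ A : Type*} [Fintype S₁] [Fintype S₂] [Fintype A]
    [Nonempty S₁] [Nonempty S₂] (g : S₁ → S₂ → A) (h : PMOneSolvable g) :
    NashSolvable g := by
  intro u₁ u₂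
  by_contra hne
  push_neg at hne
  obtain ⟨B, hB1, hB2⟩ := exists_witness g u₁ u₂ (fun s₁ s₂ => hne s₁ s₂)
  set w : A → ℝ := fun a => if a ∈ B then 1 else -1 with hw
  obtain ⟨s₁, s₂, hP1, hP2⟩ := h w (fun a => -(w a)) (fun a => by ring)
    (fun a => by by_cases hc : a ∈ B <;> simp [hw, hc])
  by_cases hc : g s₁ s₂ ∈ B
  · obtain ⟨j, hj⟩ := hB2 s₁
    have := hP2 j
    simp only [hw, hc, if_pos, if_neg hj] at this
    norm_num at this
  · obtain ⟨i, hi⟩ := hB1 s₂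
    have := hP1 i
    simp only [hw, hc, if_pos hi, if_neg hc] at this
    norm_num at this

/-- For every finite two-person game form the three solvability notions are
equivalent. -/
theorem solvability_equivalences
    {S₁ S₂ A : Type*} [Fintype S₁] [Fintype S₂] [Fintype A]
    [Nonempty S₁] [Nonempty S₂]
    (g : S₁ → S₂ → A) :
    (NashSolvable g ↔ ZeroSumSolvable g) ∧
    (ZeroSumSolvable g ↔ PMOneSolvable g) := by
  have h1 : NashSolvable g → ZeroSumSolvable g := fun h u₁ u₂ _ => h u₁ u₂
  have h2 : ZeroSumSolvable g → PMOneSolvable g := fun h u₁ u₂ hz _ => h u₁ u₂ hz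
  have h3 : PMOneSolvable g → NashSolvable g := pmone_to_nash g
  exact ⟨⟨h1, fun hz => h3 (h2 hz)⟩, ⟨h2, fun hp => h1 (h3 hp)⟩⟩
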